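/- The variable ρ is exactly insensitive to perturbations of any single weight-function nuisance: fix j₀ ∈ {0,…,n} and a bounded 𝒢_{j₀}-measurable δ : Ω → ℝ, and let ρ̃ be obtained from ρ := ∏_{j=0}^{n} π_j + Σ_{j=0}^{n} (1_{A_j} − π_j)·w_j·∏_{k=0}^{j−1} π_k by replacing w_{j₀} with w_{j₀} + δ. Then E[ρ̃ | 𝒢_0] = E[ρ | 𝒢_0] P-almost surely (in particular ∫ ρ̃ dP = ∫ ρ dP). This holds for arbitrary bounded 𝒢_j-measurable w_j, using only π_j = E[1_{A_j} | 𝒢_j]. (This is the component of the Neyman-orthogonality of ρ with respect to the weight functions used in the proof of Theorem 2.) -/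

import Mathlib

open MeasureTheory Finset

/-- **Exact insensitivity of ρ to perturbations of a single weight-function nuisance**
(component of the Neyman-orthogonality of ρ with respect to the weight functions, used in
the proof of Theorem 2). -/
theorem rho_orthogonal_weight
    {Ω : Type*} {F : MeasurableSpace Ω} {P : Measure Ω} [IsProbabilityMeasure P]
    (n : ℕ) (G : ℕ → MeasurableSpace Ω) (hG_mono : Monotone G) (hG_le : ∀ j, G j ≤ F)
    (A : ℕ → Set Ω) (hA : ∀ j ≤ n, MeasurableSet[G (j + 1)] (A j))
    (π : ℕ → Ω → ℝ) (hπ_meas : ∀ j ≤ n, Measurable[G j] (π j))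
    (ε : ℝ) (hε : 0 < ε) (hπ_bd : ∀ j ≤ n, ∀ᵐ x ∂P, ε ≤ π j x ∧ π j x ≤ 1)
    (hπ_ce : ∀ j ≤ n, π j =ᵐ[P] P[(A j).indicator (fun _ => (1 : ℝ)) | G j])
    (w : ℕ → Ω → ℝ) (hw_meas : ∀ j ≤ n, Measurable[G j] (w j))
    (Cw : ℝ) (hw_bd : ∀ j ≤ n, ∀ x, |w j x| ≤ Cw)
    (j₀ : ℕ) (hj₀ : j₀ ≤ n)
    (δ : Ω → ℝ) (hδ_meas : Measurable[G j₀] δ) (Cδ : ℝ) (hδ_bd : ∀ x, |δ x| ≤ Cδ)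
    (w' : ℕ → Ω → ℝ)
    (hw' : w' = fun j => if j = j₀ then (fun x => w j x + δ x) else w j)
    (ρ ρ' : Ω → ℝ)
    (hρ : ρ = fun x =>
      (∏ j ∈ range (n + 1), π j x)
      + ∑ j ∈ range (n + 1),
          ((A j).indicator (fun _ => (1 : ℝ)) x - π j x) * w j x * ∏ k ∈ range j, π k x)
    (hρ' : ρ' = fun x =>
      (∏ j ∈ range (n + 1), π j x)
      + ∑ j ∈ range (n + 1),
          ((A j).indicator (fun _ => (1 : ℝ)) x - π j x) * w' j x * ∏ k ∈ range j, π k x) :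
    P[ρ' | G 0] =ᵐ[P] P[ρ | G 0] ∧ ∫ x, ρ' x ∂P = ∫ x, ρ x ∂P := by
  classical
  have hΩ : Nonempty Ω := by
    by_contra hc
    rw [not_nonempty_iff] at hc
    have h0 : (P Set.univ) = 0 := by simp [Set.univ_eq_empty_iff.mpr hc]
    simp [measure_univ] at h0
  set ind : ℕ → Ω → ℝ := fun j => (A j).indicator (fun _ => (1 : ℝ)) with hind
  set h : Ω → ℝ := fun x => δ x * ∏ k ∈ range j₀, π k x with hh
  set u : Ω → ℝ := fun x => ind j₀ x - π j₀ x with hu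
  set f : Ω → ℝ := fun x => h x * u x with hf
  -- pointwise decomposition ρ' = ρ + f
  have key : ∀ x, ρ' x = ρ x + f x := by
    intro x
    simp only [hρ, hρ', hw']
    have hsum : ∑ j ∈ range (n + 1),
          (ind j x - π j x) * (if j = j₀ then (fun y => w j y + δ y) else w j) x
            * ∏ k ∈ range j, π k x
        = ∑ j ∈ range (n + 1),
          ((ind j x - π j x) * w j x * ∏ k ∈ range j, π k x
            + if j = j₀ then f x else 0) := by
      refine Finset.sum_congr rfl fun j _ => ?_
      by_cases hj : j = j₀
      · subst hj; simp only [if_pos rfl, if_true, hf, hh, hu]; ring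
      · simp [hj]
    rw [hsum, Finset.sum_add_distrib, Finset.sum_ite_eq' (range (n + 1)) j₀]
    simp only [Finset.mem_range, Nat.lt_succ_iff.mpr hj₀, if_true]
    ring
  have hρ'eq : ρ' = fun x => ρ x + f x := funext key
  -- nonnegativity of bounds
  have hCw0 : 0 ≤ Cw := le_trans (abs_nonneg _) (hw_bd 0 (Nat.zero_le n) hΩ.some)
  have hCδ0 : 0 ≤ Cδ := le_trans (abs_nonneg _) (hδ_bd hΩ.some)
  -- measurability w.r.t. F
  have hind_meas : ∀ j ≤ n, Measurable (ind j) := fun j hj =>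
    measurable_const.indicator (hG_le (j + 1) _ (hA j hj))
  have hπF : ∀ j ≤ n, Measurable (π j) := fun j hj => (hπ_meas j hj).mono (hG_le j) le_rfl
  have hwF : ∀ j ≤ n, Measurable (w j) := fun j hj => (hw_meas j hj).mono (hG_le j) le_rfl
  have hδF : Measurable δ := hδ_meas.mono (hG_le j₀) le_rfl
  have hprodF : ∀ j ≤ n + 1, Measurable fun x => ∏ k ∈ range j, π k x := by
    intro j hj
    exact Finset.measurable_prod _ fun k hk =>
      hπF k (by have := Finset.mem_range.mp hk; omega)
  have hρF : Measurable ρ := by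
    rw [hρ]
    refine (hprodF (n + 1) le_rfl).add (Finset.measurable_sum _ fun j hj => ?_)
    have hjn : j ≤ n := Nat.lt_succ_iff.mp (Finset.mem_range.mp hj)
    exact (((hind_meas j hjn).sub (hπF j hjn)).mul (hwF j hjn)).mul
      (hprodF j (by omega))
  have huF : Measurable u := (hind_meas j₀ hj₀).sub (hπF j₀ hj₀)
  have hhF : Measurable h := hδF.mul (hprodF j₀ (by omega))
  have hfF : Measurable f := hhF.mul huF
  -- pointwise bound on the indicator
  have hind01 : ∀ j x, |ind j x| ≤ 1 := by
    intro j x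
    by_cases hx : x ∈ A j <;>
      simp [hind, Set.indicator_of_mem, Set.indicator_of_notMem, hx]
  -- a.e. bounds on π, products
  have hae : ∀ᵐ x ∂P, ∀ j, j ≤ n → ε ≤ π j x ∧ π j x ≤ 1 := by
    rw [ae_all_iff]
    intro j
    by_cases hj : j ≤ n
    · filter_upwards [hπ_bd j hj] with x hx; exact fun _ => hx
    · exact ae_of_all _ fun x hj' => absurd hj' hj
  -- integrability helper
  have int_of_bd : ∀ (g : Ω → ℝ) (C : ℝ), Measurable g → (∀ᵐ x ∂P, |g x| ≤ C) →
      Integrable g P := by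
    intro g C hgm hgb
    exact (integrable_const C).mono' hgm.aestronglyMeasurable
      (hgb.mono fun x hx => by simpa using hx)
  -- a.e. bound facts at a point
  have hprod01 : ∀ x, (∀ j, j ≤ n → ε ≤ π j x ∧ π j x ≤ 1) →
      ∀ j ≤ n + 1, |∏ k ∈ range j, π k x| ≤ 1 := by
    intro x hx j hj
    have h0 : 0 ≤ ∏ k ∈ range j, π k x :=
      Finset.prod_nonneg fun k hk =>
        le_trans hε.le (hx k (by have := Finset.mem_range.mp hk; omega)).1
    rw [abs_of_nonneg h0]
    exact Finset.prod_le_one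
      (fun k hk => le_trans hε.le (hx k (by have := Finset.mem_range.mp hk; omega)).1)
      (fun k hk => (hx k (by have := Finset.mem_range.mp hk; omega)).2)
  have hdiff2 : ∀ x, (∀ j, j ≤ n → ε ≤ π j x ∧ π j x ≤ 1) →
      ∀ j ≤ n, |ind j x - π j x| ≤ 2 := by
    intro x hx j hj
    have h1 : |π j x| ≤ 1 := by
      rw [abs_le]; exact ⟨le_trans (by linarith) (hx j hj).1, (hx j hj).2⟩
    calc |ind j x - π j x| ≤ |ind j x| + |π j x| := abs_sub _ _
      _ ≤ 1 + 1 := add_le_add (hind01 j x) h1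
      _ = 2 := by norm_num
  -- integrability
  have hρ_int : Integrable ρ P := by
    refine int_of_bd ρ (1 + (n + 1) * (2 * Cw)) hρF ?_
    filter_upwards [hae] with x hx
    rw [hρ]
    refine (abs_add_le _ _).trans (add_le_add (hprod01 x hx (n + 1) le_rfl) ?_)
    refine (Finset.abs_sum_le_sum_abs _ _).trans ?_
    have hterm : ∀ j ∈ range (n + 1),
        |(ind j x - π j x) * w j x * ∏ k ∈ range j, π k x| ≤ 2 * Cw := by
      intro j hj
      have hjn : j ≤ n := Nat.lt_succ_iff.mp (Finset.mem_range.mp hj)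
      rw [abs_mul, abs_mul]
      calc |ind j x - π j x| * |w j x| * |∏ k ∈ range j, π k x|
          ≤ 2 * Cw * 1 := by
            refine mul_le_mul (mul_le_mul (hdiff2 x hx j hjn) (hw_bd j hjn x)
              (abs_nonneg _) (by norm_num)) (hprod01 x hx j (by omega))
              (abs_nonneg _) (by positivity)
        _ = 2 * Cw := mul_one _
    calc ∑ j ∈ range (n + 1), |(ind j x - π j x) * w j x * ∏ k ∈ range j, π k x|
        ≤ ∑ _j ∈ range (n + 1), (2 * Cw) := Finset.sum_le_sum hterm
      _ = (n + 1) * (2 * Cw) := by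
          rw [Finset.sum_const, Finset.card_range, nsmul_eq_mul]; push_cast; ring
  have hu_int : Integrable u P := by
    refine int_of_bd u 2 huF ?_
    filter_upwards [hae] with x hx using hdiff2 x hx j₀ hj₀
  have hf_int : Integrable f P := by
    refine int_of_bd f (Cδ * 2) hfF ?_
    filter_upwards [hae] with x hx
    rw [hf, abs_mul, hh, abs_mul]
    calc |δ x| * |∏ k ∈ range j₀, π k x| * |u x|
        ≤ Cδ * 1 * 2 := by
          refine mul_le_mul (mul_le_mul (hδ_bd x) (hprod01 x hx j₀ (by omega))
            (abs_nonneg _) hCδ0) (hdiff2 x hx j₀ hj₀) (abs_nonneg _) (by positivity)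
      _ = Cδ * 2 := by ring
  have hind_int : Integrable (ind j₀) P :=
    int_of_bd (ind j₀) 1 (hind_meas j₀ hj₀) (ae_of_all _ fun x => hind01 j₀ x)
  have hπ_int : Integrable (π j₀) P := by
    refine int_of_bd (π j₀) 1 (hπF j₀ hj₀) ?_
    filter_upwards [hπ_bd j₀ hj₀] with x hx
    rw [abs_le]; exact ⟨le_trans (by linarith) hx.1, hx.2⟩
  -- conditional expectation of u w.r.t. G j₀ is 0
  have hu_ce : P[u | G j₀] =ᵐ[P] 0 := by
    have h1 : P[u | G j₀] =ᵐ[P] P[ind j₀ | G j₀] - P[π j₀ | G j₀] :=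
      condExp_sub hind_int hπ_int _
    have h2 : P[π j₀ | G j₀] = π j₀ :=
      condExp_of_stronglyMeasurable (hG_le j₀) ((hπ_meas j₀ hj₀).stronglyMeasurable) hπ_int
    filter_upwards [h1, hπ_ce j₀ hj₀] with x hx hce
    simp only [Pi.sub_apply, h2] at hx
    simp [hx, ← hce, hind]
  -- h is G j₀-strongly measurable, pull-out property
  have hh_sm : StronglyMeasurable[G j₀] h := by
    refine Measurable.stronglyMeasurable ?_
    exact hδ_meas.mul (Finset.measurable_prod _ fun k hk =>
      (hπ_meas k (le_trans (Finset.mem_range.mp hk).le hj₀)).mono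
        (hG_mono (Finset.mem_range.mp hk).le) le_rfl)
  have hf_ce : P[f | G j₀] =ᵐ[P] 0 := by
    have hpull : P[h * u | G j₀] =ᵐ[P] h * P[u | G j₀] :=
      condExp_mul_of_stronglyMeasurable_left hh_sm (by exact hf_int) hu_int
    have : f = h * u := rfl
    rw [this]
    filter_upwards [hpull, hu_ce] with x hx hux
    simp [hx, hux]
  -- tower property
  have hf_ce0 : P[f | G 0] =ᵐ[P] 0 := by
    have htow : P[P[f | G j₀] | G 0] =ᵐ[P] P[f | G 0] :=
      condExp_condExp_of_le (hG_mono (Nat.zero_le j₀)) (hG_le j₀)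
    refine htow.symm.trans ?_
    refine (condExp_congr_ae hf_ce).trans ?_
    rw [condExp_zero]
  have hf_integral : ∫ x, f x ∂P = 0 := by
    rw [← integral_condExp (hG_le j₀) (f := f)]
    rw [integral_congr_ae hf_ce]
    simp
  constructor
  · have hadd : P[ρ' | G 0] =ᵐ[P] P[ρ | G 0] + P[f | G 0] := by
      rw [hρ'eq]
      exact condExp_add hρ_int hf_int _
    filter_upwards [hadd, hf_ce0] with x hx hfx
    simp [hx, hfx]
  · rw [hρ'eq]
    rw [integral_add hρ_int hf_int, hf_integral, add_zero]
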